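/- With q ≥ m, α² + β² = 1, α, β > 0, the vectors B^k_q|x⟩ (for x ∈ {0,1}^m, |x| ≤ k) defined by B^k_q|x⟩ = |s_1,…,s_h⟩ ⊗ (Σ_{j=0}^{q-t-1} α^j β |j+t⟩ + α^{q-t}|q⟩) ⊗ |φ_q⟩^{⊗(k−h)} are pairwise orthonormal in (ℂ^{q+1})^{⊗(k+1)}. -/

import Mathlib

open Finset

/-- Hamming weight of a bit string. -/
def hamWt {m : ℕ} (x : Fin m → Bool) : ℕ :=
  (Finset.univ.filter fun i => x i = true).card

/-- The (sorted) list of positions of the ones of `x`. -/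
def onesList {m : ℕ} (x : Fin m → Bool) : List ℕ :=
  ((List.finRange m).filter fun i => x i).map Fin.val

/-- `sRun x i` is the length `s_{i+1}` of the run of zeros preceding the
`(i+1)`-st one of `x` (writing `x = 0^{s_1}1 0^{s_2}1 ⋯ 0^{s_h}1 0^t`). -/
def sRun {m : ℕ} (x : Fin m → Bool) (i : ℕ) : ℕ :=
  (onesList x).getD i 0 - (if i = 0 then 0 else (onesList x).getD (i - 1) 0 + 1)

/-- The trailing run of zeros, `t = m - s_1 - ⋯ - s_h - h`. -/
def tTrail {m : ℕ} (x : Fin m → Bool) : ℕ :=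
  m - ((List.range (hamWt x)).map (sRun x)).sum - hamWt x

/-- Amplitudes of `|φ_q⟩ := Σ_{s=0}^{q-1} β α^s |s⟩ + α^q |q⟩ ∈ ℂ^{q+1}`. -/
noncomputable def phiVec (q : ℕ) (α β : ℝ) : Fin (q + 1) → ℝ :=
  fun s => if (s : ℕ) < q then β * α ^ (s : ℕ) else α ^ q

/-- Amplitudes of the middle register state
`Σ_{j=0}^{q-t-1} α^j β |j+t⟩ + α^{q-t}|q⟩ ∈ ℂ^{q+1}`. -/
noncomputable def midVec (q t : ℕ) (α β : ℝ) : Fin (q + 1) → ℝ :=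
  fun s =>
    if t ≤ (s : ℕ) ∧ (s : ℕ) < q then β * α ^ ((s : ℕ) - t)
    else if (s : ℕ) = q then α ^ (q - t) else 0

/-- The encoded vector
`B^k_q|x⟩ = |s_1,…,s_h⟩ ⊗ (Σ_{j=0}^{q-t-1} α^j β |j+t⟩ + α^{q-t}|q⟩) ⊗ |φ_q⟩^{⊗(k−h)}`
in `(ℂ^{q+1})^{⊗(k+1)}`, where `h = hamWt x`. -/
noncomputable def Bvec (q m k : ℕ) (α β : ℝ) (x : Fin m → Bool) :
    EuclideanSpace ℝ (Fin (k + 1) → Fin (q + 1)) :=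
  WithLp.toLp 2 fun s' => ∏ i : Fin (k + 1),
    (if (i : ℕ) < hamWt x then (if ((s' i : ℕ)) = sRun x (i : ℕ) then 1 else 0)
     else if (i : ℕ) = hamWt x then midVec q (tTrail x) α β (s' i)
     else phiVec q α β (s' i))

/-! ### Auxiliary combinatorial lemmas -/

lemma length_onesList {m : ℕ} (x : Fin m → Bool) : (onesList x).length = hamWt x := by
  rw [onesList, List.length_map, hamWt, Fin.univ_def]
  simp [Finset.filter, Finset.card, Multiset.filter_coe]

lemma sorted_onesList {m : ℕ} (x : Fin m → Bool) : (onesList x).Pairwise (· < ·) := by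
  apply List.Pairwise.map
  · exact fun a b h => h
  · exact List.Pairwise.filter _ (List.pairwise_lt_finRange m)

lemma mem_onesList {m : ℕ} (x : Fin m → Bool) (i : Fin m) :
    (i : ℕ) ∈ onesList x ↔ x i = true := by
  simp [onesList, List.mem_filter, Fin.val_eq_val]

lemma mem_onesList_lt {m : ℕ} (x : Fin m → Bool) {a : ℕ} (ha : a ∈ onesList x) : a < m := by
  simp [onesList] at ha
  obtain ⟨j, _, rfl⟩ := ha
  exact j.isLt

lemma getD_lt {m : ℕ} (x : Fin m → Bool) {j : ℕ} (hj : j < hamWt x) :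
    (onesList x).getD j 0 < m := by
  have hj' : j < (onesList x).length := by rw [length_onesList]; exact hj
  rw [List.getD_eq_getElem _ _ hj']
  exact mem_onesList_lt x (List.getElem_mem hj')

lemma getD_strict {m : ℕ} (x : Fin m → Bool) {j : ℕ} (hj : j + 1 < hamWt x) :
    (onesList x).getD j 0 < (onesList x).getD (j + 1) 0 := by
  have h2 : j + 1 < (onesList x).length := by rw [length_onesList]; exact hj
  have h1 : j < (onesList x).length := Nat.lt_of_succ_lt h2
  rw [List.getD_eq_getElem _ _ h1, List.getD_eq_getElem _ _ h2]
  exact List.pairwise_iff_getElem.mp (sorted_onesList x) j (j + 1) h1 h2 (Nat.lt_succ_self j)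

lemma getD_eq_sum {m : ℕ} (x : Fin m → Bool) {j : ℕ} (hj : j < hamWt x) :
    (onesList x).getD j 0 = (∑ r ∈ Finset.range (j + 1), sRun x r) + j := by
  induction j with
  | zero => simp [sRun]
  | succ j ih =>
    have hlt := getD_strict x hj
    have ihv := ih (Nat.lt_of_succ_lt hj)
    have hs : sRun x (j + 1) = (onesList x).getD (j + 1) 0 - ((onesList x).getD j 0 + 1) := by
      simp [sRun]
    rw [Finset.sum_range_succ]
    omega

lemma sum_sRun_add_le {m : ℕ} (x : Fin m → Bool) :
    (∑ r ∈ Finset.range (hamWt x), sRun x r) + hamWt x ≤ m := by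
  rcases Nat.eq_zero_or_pos (hamWt x) with h | h
  · simp [h]
  · have hj : hamWt x - 1 < hamWt x := by omega
    have h1 := getD_eq_sum x hj
    have h2 := getD_lt x hj
    have h3 : (∑ r ∈ Finset.range (hamWt x - 1 + 1), sRun x r) + (hamWt x - 1) < m := by omega
    have he : hamWt x - 1 + 1 = hamWt x := by omega
    rw [he] at h3
    omega

lemma tTrail_eq {m : ℕ} (x : Fin m → Bool) :
    tTrail x = m - (∑ r ∈ Finset.range (hamWt x), sRun x r) - hamWt x := rfl

lemma tTrail_le {m : ℕ} (x : Fin m → Bool) : tTrail x ≤ m := by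
  rw [tTrail_eq]; omega

lemma sRun_lt {m : ℕ} (x : Fin m → Bool) {j : ℕ} (hj : j < hamWt x) : sRun x j < m := by
  have h1 := getD_lt x hj
  have h2 : sRun x j ≤ (onesList x).getD j 0 := Nat.sub_le _ _
  omega

lemma eq_of_runs {m : ℕ} (x y : Fin m → Bool) (hh : hamWt x = hamWt y)
    (hr : ∀ j < hamWt x, sRun x j = sRun y j) : x = y := by
  have hlen : (onesList x).length = (onesList y).length := by
    rw [length_onesList, length_onesList, hh]
  have hlist : onesList x = onesList y := by
    apply List.ext_getElem hlen
    intro j h1 h2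
    have hj : j < hamWt x := by rwa [length_onesList] at h1
    have hx := getD_eq_sum x hj
    have hy := getD_eq_sum y (hh ▸ hj)
    rw [List.getD_eq_getElem _ _ h1] at hx
    rw [List.getD_eq_getElem _ _ h2] at hy
    have hs : ∑ r ∈ Finset.range (j + 1), sRun x r = ∑ r ∈ Finset.range (j + 1), sRun y r :=
      Finset.sum_congr rfl fun r hr' => hr r (by
        have := Finset.mem_range.mp hr'; omega)
    rw [hx, hy, hs]
  funext i
  have hmem : ((i : ℕ) ∈ onesList x) ↔ ((i : ℕ) ∈ onesList y) := by rw [hlist]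
  rw [mem_onesList, mem_onesList] at hmem
  cases hx' : x i <;> cases hy' : y i <;> simp_all

lemma sRun_lt_tTrail {m : ℕ} (x y : Fin m → Bool)
    (hr : ∀ j < hamWt x, sRun x j = sRun y j) (hlt : hamWt x < hamWt y) :
    sRun y (hamWt x) < tTrail x := by
  have h1 := getD_eq_sum y hlt
  have h2 := getD_lt y hlt
  rw [Finset.sum_range_succ] at h1
  have hsum : ∑ r ∈ Finset.range (hamWt x), sRun y r
      = ∑ r ∈ Finset.range (hamWt x), sRun x r :=
    Finset.sum_congr rfl fun r hr' => (hr r (Finset.mem_range.mp hr')).symm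
  have ht := tTrail_eq x
  have hle := sum_sRun_add_le x
  omega

/-! ### Auxiliary analytic lemmas -/

lemma geom_aux {α β : ℝ} (hαβ : α ^ 2 + β ^ 2 = 1) (n : ℕ) :
    ∑ j ∈ Finset.range n, β ^ 2 * (α ^ 2) ^ j = 1 - (α ^ 2) ^ n := by
  induction n with
  | zero => simp
  | succ n ih =>
    rw [Finset.sum_range_succ, ih, pow_succ]
    linear_combination (α ^ 2) ^ n * hαβ

lemma phi_norm {α β : ℝ} (hαβ : α ^ 2 + β ^ 2 = 1) (q : ℕ) :
    ∑ s : Fin (q + 1), phiVec q α β s * phiVec q α β s = 1 := by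
  have h1 : ∀ s : Fin (q + 1), phiVec q α β s * phiVec q α β s
      = (fun j : ℕ => if j < q then β ^ 2 * (α ^ 2) ^ j else (α ^ 2) ^ q) (s : ℕ) := by
    intro s
    simp only [phiVec]
    split <;> rw [← pow_mul] <;> ring
  calc ∑ s : Fin (q + 1), phiVec q α β s * phiVec q α β s
      = ∑ j ∈ Finset.range (q + 1), (if j < q then β ^ 2 * (α ^ 2) ^ j else (α ^ 2) ^ q) := by
        rw [← Fin.sum_univ_eq_sum_range]; exact Finset.sum_congr rfl fun s _ => h1 s
    _ = 1 := by
        rw [Finset.sum_range_succ, if_neg (lt_irrefl q),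
          Finset.sum_congr rfl fun j hj => if_pos (Finset.mem_range.mp hj), geom_aux hαβ]
        ring

lemma mid_norm {α β : ℝ} (hαβ : α ^ 2 + β ^ 2 = 1) (q t : ℕ) :
    ∑ s : Fin (q + 1), midVec q t α β s * midVec q t α β s = 1 := by
  have h1 : ∀ s : Fin (q + 1), midVec q t α β s * midVec q t α β s
      = (fun j : ℕ => if t ≤ j ∧ j < q then β ^ 2 * (α ^ 2) ^ (j - t)
          else if j = q then (α ^ 2) ^ (q - t) else 0) (s : ℕ) := by
    intro s
    simp only [midVec]
    split
    · rw [← pow_mul]; ring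
    · split
      · rw [← pow_mul]; ring
      · ring
  calc ∑ s : Fin (q + 1), midVec q t α β s * midVec q t α β s
      = ∑ j ∈ Finset.range (q + 1), (if t ≤ j ∧ j < q then β ^ 2 * (α ^ 2) ^ (j - t)
          else if j = q then (α ^ 2) ^ (q - t) else 0) := by
        rw [← Fin.sum_univ_eq_sum_range]; exact Finset.sum_congr rfl fun s _ => h1 s
    _ = 1 := by
        rw [Finset.sum_range_succ]
        have hq : ¬(t ≤ q ∧ q < q) := by omega
        rw [if_neg hq, if_pos rfl]
        have h2 : ∀ j ∈ Finset.range q, (if t ≤ j ∧ j < q then β ^ 2 * (α ^ 2) ^ (j - t)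
            else if j = q then (α ^ 2) ^ (q - t) else 0)
            = if t ≤ j then β ^ 2 * (α ^ 2) ^ (j - t) else 0 := by
          intro j hj
          have hjq := Finset.mem_range.mp hj
          by_cases h : t ≤ j
          · rw [if_pos ⟨h, hjq⟩, if_pos h]
          · rw [if_neg (by omega), if_neg (by omega), if_neg h]
        rw [Finset.sum_congr rfl h2, ← Finset.sum_filter]
        have h3 : Finset.filter (fun j => t ≤ j) (Finset.range q) = Finset.Ico t q := by
          ext j; simp [Finset.mem_Ico, and_comm]
        rw [h3, Finset.sum_Ico_eq_sum_range]
        have h4 : ∀ i ∈ Finset.range (q - t),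
            β ^ 2 * (α ^ 2) ^ (t + i - t) = β ^ 2 * (α ^ 2) ^ i := by
          intro i _; congr 2; omega
        rw [Finset.sum_congr rfl h4, geom_aux hαβ]
        ring

lemma delta_delta (q a b : ℕ) (ha : a ≤ q) :
    ∑ s : Fin (q + 1), (if (s : ℕ) = a then (1 : ℝ) else 0) * (if (s : ℕ) = b then 1 else 0)
      = if a = b then 1 else 0 := by
  rw [Finset.sum_eq_single (⟨a, by omega⟩ : Fin (q + 1))]
  · simp
  · intro s _ hs
    rw [if_neg (fun h => hs (Fin.ext h)), zero_mul]
  · intro h; exact absurd (Finset.mem_univ _) h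

lemma mid_delta {α β : ℝ} (q t b : ℕ) (hb : b < t) (hbq : b < q) :
    ∑ s : Fin (q + 1), midVec q t α β s * (if (s : ℕ) = b then (1 : ℝ) else 0) = 0 := by
  rw [Finset.sum_eq_single (⟨b, by omega⟩ : Fin (q + 1))]
  · have h1 : ¬(t ≤ b ∧ b < q) := by omega
    have h2 : b ≠ q := by omega
    simp [midVec, h1, h2]
  · intro s _ hs
    rw [if_neg (fun h => hs (Fin.ext h)), mul_zero]
  · intro h; exact absurd (Finset.mem_univ _) h

/-! ### Factorization of the inner product -/

/-- The `i`-th tensor factor of `Bvec`. -/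
noncomputable def fct (q m k : ℕ) (α β : ℝ) (x : Fin m → Bool) (i : Fin (k + 1))
    (s : Fin (q + 1)) : ℝ :=
  if (i : ℕ) < hamWt x then (if (s : ℕ) = sRun x (i : ℕ) then 1 else 0)
  else if (i : ℕ) = hamWt x then midVec q (tTrail x) α β s
  else phiVec q α β s

lemma inner_Bvec (q m k : ℕ) (α β : ℝ) (x y : Fin m → Bool) :
    (inner ℝ (Bvec q m k α β x) (Bvec q m k α β y) : ℝ)
      = ∏ i : Fin (k + 1), ∑ s : Fin (q + 1), fct q m k α β x i s * fct q m k α β y i s := by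
  simp only [PiLp.inner_apply, RCLike.inner_apply, conj_trivial]
  have h1 : ∀ s' : Fin (k + 1) → Fin (q + 1),
      Bvec q m k α β x s' * Bvec q m k α β y s'
        = ∏ i, (fct q m k α β x i (s' i) * fct q m k α β y i (s' i)) := by
    intro s'
    rw [show Bvec q m k α β x s' = ∏ i, fct q m k α β x i (s' i) from rfl,
      show Bvec q m k α β y s' = ∏ i, fct q m k α β y i (s' i) from rfl,
      ← Finset.prod_mul_distrib]
  rw [Finset.sum_congr rfl fun s' _ => (mul_comm _ _).trans (h1 s'), ← Fintype.piFinset_univ]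
  exact Finset.sum_prod_piFinset (ι := Fin (k + 1)) univ
    fun i s => fct q m k α β x i s * fct q m k α β y i s

/-- For `q ≥ m` and `α, β > 0` with `α² + β² = 1`, the vectors `B^k_q|x⟩`
for `x ∈ {0,1}^m` of Hamming weight `≤ k` are pairwise orthonormal. -/
theorem Bvec_orthonormal (q m k : ℕ) (hq : m ≤ q) (α β : ℝ)
    (hα : 0 < α) (hβ : 0 < β) (hαβ : α ^ 2 + β ^ 2 = 1) :
    ∀ x y : Fin m → Bool, hamWt x ≤ k → hamWt y ≤ k →
      (inner ℝ (Bvec q m k α β x) (Bvec q m k α β y) : ℝ)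
        = if x = y then 1 else 0 := by
  have key : ∀ x y : Fin m → Bool, hamWt x ≤ k → hamWt y ≤ k → hamWt x ≤ hamWt y →
      (inner ℝ (Bvec q m k α β x) (Bvec q m k α β y) : ℝ) = if x = y then 1 else 0 := by
    intro x y hx hy hxy
    rw [inner_Bvec]
    by_cases hexy : x = y
    · subst hexy
      rw [if_pos rfl]
      apply Finset.prod_eq_one
      intro i _
      rcases lt_trichotomy (i : ℕ) (hamWt x) with h | h | h
      · have hs : sRun x (i : ℕ) ≤ q := le_of_lt (lt_of_lt_of_le (sRun_lt x h) hq)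
        simp only [fct, if_pos h]
        rw [delta_delta q _ _ hs, if_pos rfl]
      · simp only [fct, if_neg (by omega : ¬((i : ℕ) < hamWt x)), if_pos h]
        exact mid_norm hαβ q _
      · simp only [fct, if_neg (by omega : ¬((i : ℕ) < hamWt x)),
          if_neg (by omega : ¬((i : ℕ) = hamWt x))]
        exact phi_norm hαβ q
    · rw [if_neg hexy]
      by_cases hex : ∃ j, j < hamWt x ∧ sRun x j ≠ sRun y j
      · obtain ⟨j, hj, hne⟩ := hex
        have hjk : j < k + 1 := by omega
        apply Finset.prod_eq_zero (Finset.mem_univ (⟨j, hjk⟩ : Fin (k + 1)))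
        have hjy : j < hamWt y := lt_of_lt_of_le hj hxy
        have hs : sRun x j ≤ q := le_of_lt (lt_of_lt_of_le (sRun_lt x hj) hq)
        simp only [fct, Fin.val_mk, if_pos hj, if_pos hjy]
        rw [delta_delta q _ _ hs, if_neg hne]
      · push_neg at hex
        have hlt : hamWt x < hamWt y :=
          lt_of_le_of_ne hxy fun h => hexy (eq_of_runs x y h hex)
        have hk : hamWt x < k + 1 := by omega
        apply Finset.prod_eq_zero (Finset.mem_univ (⟨hamWt x, hk⟩ : Fin (k + 1)))
        have hb := sRun_lt_tTrail x y hex hlt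
        have hbq : sRun y (hamWt x) < q :=
          lt_of_lt_of_le (lt_of_lt_of_le hb (tTrail_le x)) hq
        simp only [fct, Fin.val_mk, if_neg (lt_irrefl (hamWt x)), if_pos rfl, if_pos hlt]
        exact mid_delta q _ _ hb hbq
  intro x y hx hy
  rcases le_total (hamWt x) (hamWt y) with h | h
  · exact key x y hx hy h
  · rw [real_inner_comm, key y x hy hx h]
    simp [eq_comm]
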